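/- For all real α ≥ 1 and y > 0, coth(α y) · coth(y/α) ≥ coth(y)², with equality if and only if α = 1. -/

import Mathlib

open Real Set in
private lemma sinh_lt_mul_cosh' {r : ℝ} (hr : 0 < r) : Real.sinh r < r * Real.cosh r := by
  have hmono : StrictMonoOn (fun t : ℝ => t * Real.cosh t - Real.sinh t) (Set.Ici 0) := by
    apply strictMonoOn_of_deriv_pos (convex_Ici 0)
    · fun_prop
    · intro t ht
      rw [interior_Ici, mem_Ioi] at ht
      have h1 : HasDerivAt (fun t : ℝ => t * Real.cosh t - Real.sinh t)
          ((1 * Real.cosh t + t * Real.sinh t) - Real.cosh t) t :=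
        ((hasDerivAt_id t).mul (Real.hasDerivAt_cosh t)).sub (Real.hasDerivAt_sinh t)
      rw [h1.deriv]
      have := Real.sinh_pos_iff.2 ht
      nlinarith
  have := hmono (le_refl (0:ℝ) : (0:ℝ) ∈ Ici 0) (le_of_lt hr : r ∈ Ici 0) hr
  simpa using this

open Real Set in
private lemma strictConvexOn_cosh_sqrt' :
    StrictConvexOn ℝ (Set.Ici (0:ℝ)) (fun x => Real.cosh (Real.sqrt x)) := by
  set g : ℝ → ℝ := fun x => Real.sinh (Real.sqrt x) * (1 / (2 * Real.sqrt x)) with hg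
  have hder : ∀ t ∈ Set.Ioi (0:ℝ), HasDerivAt (fun x => Real.cosh (Real.sqrt x)) (g t) t := by
    intro t ht
    exact (Real.hasDerivAt_sqrt (ne_of_gt ht)).cosh
  apply strictConvexOn_of_deriv2_pos (convex_Ici 0)
  · fun_prop
  · intro x hx
    rw [interior_Ici, mem_Ioi] at hx
    have hx' : (0:ℝ) < Real.sqrt x := Real.sqrt_pos.2 hx
    have heq : Set.EqOn (deriv (fun x => Real.cosh (Real.sqrt x))) g (Set.Ioi 0) :=
      fun t ht => (hder t ht).deriv
    have hev : deriv (fun x => Real.cosh (Real.sqrt x)) =ᶠ[nhds x] g :=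
      Filter.eventuallyEq_of_mem (isOpen_Ioi.mem_nhds hx) heq
    have h2 : deriv^[2] (fun x => Real.cosh (Real.sqrt x)) x = deriv g x := by
      simp only [Function.iterate_succ, Function.iterate_zero, Function.comp_apply, id]
      exact Filter.EventuallyEq.deriv_eq hev
    rw [h2]
    have hgd : HasDerivAt g
        ((Real.cosh (Real.sqrt x) * (1 / (2 * Real.sqrt x)) * (2 * Real.sqrt x)
          - Real.sinh (Real.sqrt x) * (2 * (1 / (2 * Real.sqrt x)))) / (2 * Real.sqrt x)^2) x := by
      have hs := Real.hasDerivAt_sqrt (ne_of_gt hx)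
      have hnum : HasDerivAt (fun x => Real.sinh (Real.sqrt x))
          (Real.cosh (Real.sqrt x) * (1 / (2 * Real.sqrt x))) x := hs.sinh
      have hden : HasDerivAt (fun x => 2 * Real.sqrt x) (2 * (1 / (2 * Real.sqrt x))) x :=
        hs.const_mul 2
      have hden0 : (2 : ℝ) * Real.sqrt x ≠ 0 := by positivity
      have h3 := hnum.div hden hden0
      have e : g = (fun x => Real.sinh (Real.sqrt x)) / (fun x => 2 * Real.sqrt x) := by
        funext t; simp [hg, div_eq_mul_inv]
      rw [e]; exact h3
    rw [hgd.deriv]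
    rw [div_pos_iff]
    left
    constructor
    · have : Real.cosh (Real.sqrt x) * (1 / (2 * Real.sqrt x)) * (2 * Real.sqrt x)
          = Real.cosh (Real.sqrt x) := by field_simp
      rw [this]
      rw [sub_pos]
      calc Real.sinh (Real.sqrt x) * (2 * (1 / (2 * Real.sqrt x)))
          = Real.sinh (Real.sqrt x) / Real.sqrt x := by field_simp
        _ < Real.cosh (Real.sqrt x) := by
            rw [div_lt_iff₀ hx']
            nlinarith [sinh_lt_mul_cosh' hx']
    · positivity

open Real Set in
private lemma cosh_le_mul_cosh' {d s q : ℝ} (hd : 0 ≤ d) (hs : 0 ≤ s) (hq : 0 ≤ q)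
    (h : q ^ 2 = d ^ 2 + s ^ 2) :
    Real.cosh q ≤ Real.cosh d * Real.cosh s := by
  have hc := strictConvexOn_cosh_sqrt'.convexOn.2
    (show ((d-s)^2 : ℝ) ∈ Ici (0:ℝ) from mem_Ici.2 (by positivity))
    (show ((d+s)^2 : ℝ) ∈ Ici (0:ℝ) from mem_Ici.2 (by positivity))
    (by norm_num : (0:ℝ) ≤ 1/2) (by norm_num : (0:ℝ) ≤ 1/2) (by norm_num)
  simp only [smul_eq_mul] at hc
  have hmid : (1/2 : ℝ) * (d-s)^2 + (1/2 : ℝ) * (d+s)^2 = q ^ 2 := by rw [h]; ring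
  rw [hmid, Real.sqrt_sq hq, Real.sqrt_sq_eq_abs, Real.sqrt_sq_eq_abs,
    Real.cosh_abs, Real.cosh_abs] at hc
  nlinarith [Real.cosh_add d s, Real.cosh_sub d s, hc]

open Real Set in
private lemma cosh_lt_mul_cosh' {d s q : ℝ} (hd : 0 < d) (hs : 0 < s) (hq : 0 ≤ q)
    (h : q ^ 2 = d ^ 2 + s ^ 2) :
    Real.cosh q < Real.cosh d * Real.cosh s := by
  have hne : ((d-s)^2 : ℝ) ≠ (d+s)^2 := by nlinarith
  have hc := strictConvexOn_cosh_sqrt'.2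
    (show ((d-s)^2 : ℝ) ∈ Ici (0:ℝ) from mem_Ici.2 (by positivity))
    (show ((d+s)^2 : ℝ) ∈ Ici (0:ℝ) from mem_Ici.2 (by positivity)) hne
    (by norm_num : (0:ℝ) < 1/2) (by norm_num : (0:ℝ) < 1/2) (by norm_num)
  simp only [smul_eq_mul] at hc
  have hmid : (1/2 : ℝ) * (d-s)^2 + (1/2 : ℝ) * (d+s)^2 = q ^ 2 := by rw [h]; ring
  rw [hmid, Real.sqrt_sq hq, Real.sqrt_sq_eq_abs, Real.sqrt_sq_eq_abs,
    Real.cosh_abs, Real.cosh_abs] at hc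
  nlinarith [Real.cosh_add d s, Real.cosh_sub d s, hc]

/-- The real hyperbolic cotangent. -/
noncomputable def coth (t : ℝ) : ℝ := Real.cosh t / Real.sinh t

/-- Lemma: `coth(αy)·coth(y/α) ≥ coth(y)²` for `α ≥ 1`, `y > 0`,
with equality iff `α = 1`. -/
theorem coth_mul_coth_div_ge (α y : ℝ) (hα : 1 ≤ α) (hy : 0 < y) :
    coth y ^ 2 ≤ coth (α * y) * coth (y / α) ∧
    (coth (α * y) * coth (y / α) = coth y ^ 2 ↔ α = 1) := by
  have hα0 : (0:ℝ) < α := lt_of_lt_of_le one_pos hα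
  have ha : 0 < α * y := by positivity
  have hb : 0 < y / α := by positivity
  have Sy : 0 < Real.sinh y := Real.sinh_pos_iff.2 hy
  have Sa : 0 < Real.sinh (α * y) := Real.sinh_pos_iff.2 ha
  have Sb : 0 < Real.sinh (y / α) := Real.sinh_pos_iff.2 hb
  have hab : (α * y) * (y / α) = y ^ 2 := by field_simp
  have hba : y / α ≤ α * y := by
    rw [div_le_iff₀ hα0]; nlinarith
  have hd : 0 ≤ α * y - y / α := by linarith
  have hq2 : (α * y + y / α) ^ 2 = (α * y - y / α) ^ 2 + (2 * y) ^ 2 := by nlinarith [hab]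
  have prod_eq : coth (α * y) * coth (y / α)
      = (Real.cosh (α * y) * Real.cosh (y / α)) / (Real.sinh (α * y) * Real.sinh (y / α)) := by
    unfold coth; rw [div_mul_div_comm]
  have sq_eq : coth y ^ 2 = Real.cosh y ^ 2 / Real.sinh y ^ 2 := by
    unfold coth; rw [div_pow]
  have hSab : 0 < Real.sinh (α * y) * Real.sinh (y / α) := mul_pos Sa Sb
  have hSy2 : 0 < Real.sinh y ^ 2 := by positivity
  have main_le : coth y ^ 2 ≤ coth (α * y) * coth (y / α) := by
    rw [prod_eq, sq_eq, div_le_div_iff₀ hSy2 hSab]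
    have key := cosh_le_mul_cosh' hd (by linarith : (0:ℝ) ≤ 2 * y)
      (by positivity : (0:ℝ) ≤ α * y + y / α) hq2
    rw [Real.cosh_add, Real.cosh_sub, Real.cosh_two_mul, Real.sinh_sq] at key
    rw [Real.sinh_sq]
    nlinarith [key]
  have main_lt : 1 < α → coth y ^ 2 < coth (α * y) * coth (y / α) := by
    intro h1
    have hd' : 0 < α * y - y / α := by
      have : y / α < y := div_lt_self hy h1
      nlinarith
    rw [prod_eq, sq_eq, div_lt_div_iff₀ hSy2 hSab]
    have key := cosh_lt_mul_cosh' hd' (by linarith : (0:ℝ) < 2 * y)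
      (by positivity : (0:ℝ) ≤ α * y + y / α) hq2
    rw [Real.cosh_add, Real.cosh_sub, Real.cosh_two_mul, Real.sinh_sq] at key
    rw [Real.sinh_sq]
    nlinarith [key]
  refine ⟨main_le, ?_, ?_⟩
  · intro heq
    by_contra hne
    exact (main_lt (lt_of_le_of_ne hα (Ne.symm hne))).ne' heq
  · intro h
    subst h
    rw [one_mul, div_one, sq]
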